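/- Let f : [0,1] → ℝ be convex and differentiable, and let p : [0,1] → ℝ be nonnegative, continuous, symmetric about 1/2 (p(1-t) = p(t)), and non-decreasing on [0, 1/2]. Then (∫₀¹ f'(t) dt)·(∫₀¹ t·p(t) dt) ≤ (∫₀¹ t·f'(t) dt)·(∫₀¹ p(t) dt). -/
import Mathlib


open MeasureTheory Set intervalIntegral

theorem moment_inequality (f f' p : ℝ → ℝ)
    (hf : ConvexOn ℝ (Icc (0:ℝ) 1) f)
    (hderiv : ∀ t ∈ Icc (0:ℝ) 1, HasDerivAt f (f' t) t)
    (hpc : ContinuousOn p (Icc (0:ℝ) 1))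
    (hp0 : ∀ t ∈ Icc (0:ℝ) 1, 0 ≤ p t)
    (hpsym : ∀ t ∈ Icc (0:ℝ) 1, p (1 - t) = p t)
    (hpmono : MonotoneOn p (Icc (0:ℝ) (1 / 2)))
    (hf'int : IntervalIntegrable f' volume 0 1)
    (htf'int : IntervalIntegrable (fun t => t * f' t) volume 0 1) :
    (∫ t in (0:ℝ)..1, f' t) * (∫ t in (0:ℝ)..1, t * p t) ≤
      (∫ t in (0:ℝ)..1, t * f' t) * (∫ t in (0:ℝ)..1, p t) := by
  have huIcc : uIcc (0:ℝ) 1 = Icc (0:ℝ) 1 := uIcc_of_le zero_le_one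
  -- f' is monotone on [0,1]
  have hmono : MonotoneOn f' (Icc (0:ℝ) 1) := by
    intro x hx y hy hxy
    rcases eq_or_lt_of_le hxy with rfl | hlt
    · exact le_rfl
    · exact le_trans (hf.le_slope_of_hasDerivAt hx hy hlt (hderiv x hx))
        (hf.slope_le_of_hasDerivAt hx hy hlt (hderiv y hy))
  -- integrability of p and t*p
  have hpint : IntervalIntegrable p volume 0 1 := by
    apply ContinuousOn.intervalIntegrable; rwa [huIcc]
  have htpint : IntervalIntegrable (fun t => t * p t) volume 0 1 := by
    apply ContinuousOn.intervalIntegrable; rw [huIcc]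
    exact continuousOn_id.mul hpc
  set A := ∫ t in (0:ℝ)..1, f' t with hA
  set C := ∫ t in (0:ℝ)..1, t * f' t with hC
  set D := ∫ t in (0:ℝ)..1, p t with hD
  set B := ∫ t in (0:ℝ)..1, t * p t with hB
  -- symmetry of p gives B = D/2
  have hBD : 2 * B = D := by
    have h1 : (∫ t in (0:ℝ)..1, (1 - t) * p (1 - t)) = B := by
      have := intervalIntegral.integral_comp_sub_left (fun t => t * p t) 1 (a := 0) (b := 1)
      simpa using this
    have h2 : (∫ t in (0:ℝ)..1, (1 - t) * p (1 - t)) = ∫ t in (0:ℝ)..1, (1 - t) * p t := by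
      apply intervalIntegral.integral_congr
      intro t ht
      rw [huIcc] at ht
      simp only [hpsym t ht]
    have h3 : (∫ t in (0:ℝ)..1, (1 - t) * p t) = D - B := by
      have : (∫ t in (0:ℝ)..1, (1 - t) * p t) = ∫ t in (0:ℝ)..1, (p t - t * p t) := by
        apply intervalIntegral.integral_congr
        intro t _; ring
      rw [this, intervalIntegral.integral_sub hpint htpint]
    rw [h2, h3] at h1
    linarith
  -- D ≥ 0
  have hDnn : 0 ≤ D := by
    apply intervalIntegral.integral_nonneg zero_le_one
    intro u hu; exact hp0 u hu
  -- monotonicity of f' gives A/2 ≤ C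
  have hAC : A ≤ 2 * C := by
    have hgint : IntervalIntegrable (fun t => (t - 1/2) * f' t) volume 0 1 := by
      have heq : (fun t : ℝ => (t - 1/2) * f' t) = fun t => t * f' t - (1/2) * f' t := by
        funext t; ring
      rw [heq]
      exact htf'int.sub (hf'int.const_mul _)
    have hgint' : IntervalIntegrable (fun t => ((1 - t) - 1/2) * f' (1 - t)) volume 0 1 := by
      have := (hgint.comp_sub_left 1).symm
      simpa using this
    have h1 : (∫ t in (0:ℝ)..1, ((1 - t) - 1/2) * f' (1 - t)) =
        ∫ t in (0:ℝ)..1, (t - 1/2) * f' t := by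
      have := intervalIntegral.integral_comp_sub_left (fun t => (t - 1/2) * f' t) 1 (a := 0) (b := 1)
      simpa using this
    have h2 : 0 ≤ ∫ t in (0:ℝ)..1, ((t - 1/2) * f' t + ((1 - t) - 1/2) * f' (1 - t)) := by
      apply intervalIntegral.integral_nonneg zero_le_one
      intro u hu
      have h1u : 1 - u ∈ Icc (0:ℝ) 1 := ⟨by linarith [hu.2], by linarith [hu.1]⟩
      rcases le_total u (1/2 : ℝ) with h | h
      · have : f' u ≤ f' (1 - u) := hmono hu h1u (by linarith)
        nlinarith
      · have : f' (1 - u) ≤ f' u := hmono h1u hu (by linarith)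
        nlinarith
    rw [intervalIntegral.integral_add hgint hgint', h1] at h2
    have h3 : (∫ t in (0:ℝ)..1, (t - 1/2) * f' t) = C - (1/2) * A := by
      have : (∫ t in (0:ℝ)..1, (t - 1/2) * f' t) =
          ∫ t in (0:ℝ)..1, (t * f' t - (1/2) * f' t) := by
        apply intervalIntegral.integral_congr; intro t _; ring
      rw [this, intervalIntegral.integral_sub htf'int (hf'int.const_mul _),
        intervalIntegral.integral_const_mul]
    rw [h3] at h2
    linarith
  have hBnn : 0 ≤ B := by linarith
  have hCD : C * D = 2 * (C * B) := by rw [← hBD]; ring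
  nlinarith [mul_le_mul_of_nonneg_right hAC hBnn]
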